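/- Let A be a non-degenerate algebra with a regular multiplier Hopf algebra structure (A,Δ) admitting a faithful left invariant functional φ. Then for any finite collection a₁,...,aₙ ∈ A there exists c ∈ A with c·aᵢ = aᵢ·c = aᵢ for all i (local units exist). -/

import Mathlib

open TensorProduct LinearMap

noncomputable section

/-- Slice on the left leg: `sliceL θ (x ⊗ y) = θ x • y`, i.e. `(θ ⊙ ι)`. -/
def sliceL {M N : Type*} [AddCommGroup M] [Module ℂ M] [AddCommGroup N] [Module ℂ N]
    (θ : M →ₗ[ℂ] ℂ) : M ⊗[ℂ] N →ₗ[ℂ] N :=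
  TensorProduct.lift (LinearMap.lsmul ℂ N ∘ₗ θ)

/-- Slice on the right leg: `sliceR θ (x ⊗ y) = θ y • x`, i.e. `(ι ⊙ θ)`. -/
def sliceR {M N : Type*} [AddCommGroup M] [Module ℂ M] [AddCommGroup N] [Module ℂ N]
    (θ : N →ₗ[ℂ] ℂ) : M ⊗[ℂ] N →ₗ[ℂ] M :=
  TensorProduct.lift ((LinearMap.lsmul ℂ M ∘ₗ θ).flip)

/-- An algebraic quantum group: a regular multiplier Hopf algebra `(A, Δ)` with a
(faithful) left invariant functional `φ`.  The comultiplication is encoded through the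
canonical bijections `T1 a ⊗ b = Δ(a)(b ⊗ 1)`, `T2 (a ⊗ b) = Δ(a)(1 ⊗ b)`,
`T3 (a ⊗ b) = (b ⊗ 1)Δ(a)`, `T4 (a ⊗ b) = (1 ⊗ b)Δ(a)` together with the left and right
multiplication operators `ΔL a`/`ΔR a` by `Δ(a)` on `A ⊗ A`. -/
structure AQG (A : Type*) [NonUnitalRing A] [Module ℂ A]
    [SMulCommClass ℂ A A] [IsScalarTower ℂ A A] where
  T1 : A ⊗[ℂ] A ≃ₗ[ℂ] A ⊗[ℂ] A
  T2 : A ⊗[ℂ] A ≃ₗ[ℂ] A ⊗[ℂ] A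
  T3 : A ⊗[ℂ] A ≃ₗ[ℂ] A ⊗[ℂ] A
  T4 : A ⊗[ℂ] A ≃ₗ[ℂ] A ⊗[ℂ] A
  counit : A →ₗ[ℂ] ℂ
  S : A ≃ₗ[ℂ] A
  phi : A →ₗ[ℂ] ℂ
  rho : A ≃ₗ[ℂ] A
  ΔL : A →ₗ[ℂ] (A ⊗[ℂ] A →ₗ[ℂ] A ⊗[ℂ] A)
  ΔR : A →ₗ[ℂ] (A ⊗[ℂ] A →ₗ[ℂ] A ⊗[ℂ] A)
  /- non-degeneracy of the algebra `A` -/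
  nondeg_l : ∀ a : A, (∀ b : A, a * b = 0) → a = 0
  nondeg_r : ∀ a : A, (∀ b : A, b * a = 0) → a = 0
  /- the counit is a non-zero homomorphism with `(ε ⊙ ι)Δ = (ι ⊙ ε)Δ = ι` -/
  counit_mul : ∀ a b : A, counit (a * b) = counit a * counit b
  counit_ne : counit ≠ 0
  counit_T1 : ∀ a b : A, sliceR counit (T1 (a ⊗ₜ b)) = a * b
  counit_T2 : ∀ a b : A, sliceL counit (T2 (a ⊗ₜ b)) = a * b
  counit_T3 : ∀ a b : A, sliceR counit (T3 (a ⊗ₜ b)) = b * a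
  counit_T4 : ∀ a b : A, sliceL counit (T4 (a ⊗ₜ b)) = b * a
  /- the antipode -/
  S_mul : ∀ a b : A, S (a * b) = S b * S a
  antipode_l : ∀ a b : A,
    LinearMap.mul' ℂ A (LinearMap.rTensor A S.toLinearMap (T2 (a ⊗ₜ b))) = counit a • b
  antipode_r : ∀ a b : A,
    LinearMap.mul' ℂ A (LinearMap.lTensor A S.toLinearMap (T3 (a ⊗ₜ b))) = counit a • b
  /- `φ` is a faithful left invariant functional -/
  phi_ne : phi ≠ 0
  phi_faithful_l : ∀ a : A, (∀ b : A, phi (a * b) = 0) → a = 0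
  phi_faithful_r : ∀ a : A, (∀ b : A, phi (b * a) = 0) → a = 0
  left_inv_T1 : ∀ a b : A, sliceR phi (T1 (a ⊗ₜ b)) = phi a • b
  left_inv_T3 : ∀ a b : A, sliceR phi (T3 (a ⊗ₜ b)) = phi a • b
  /- the weak KMS automorphism `ρ`: `φ(ab) = φ(b ρ(a))` -/
  rho_mul : ∀ a b : A, rho (a * b) = rho a * rho b
  phi_kms : ∀ a b : A, phi (a * b) = phi (b * rho a)
  /- `Δ` is a (non-degenerate) homomorphism into `M(A ⊗ A)` -/
  ΔL_mul : ∀ (a b : A) (z : A ⊗[ℂ] A), ΔL (a * b) z = ΔL a (ΔL b z)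
  ΔR_mul : ∀ (a b : A) (z : A ⊗[ℂ] A), ΔR (a * b) z = ΔR b (ΔR a z)
  ΔL_assoc : ∀ (a : A) (z w : A ⊗[ℂ] A), ΔL a (z * w) = ΔL a z * w
  ΔR_assoc : ∀ (a : A) (z w : A ⊗[ℂ] A), ΔR a (z * w) = z * ΔR a w
  ΔLR : ∀ (a : A) (z w : A ⊗[ℂ] A), ΔR a z * w = z * ΔL a w
  ΔL_T1 : ∀ (a b : A) (z : A ⊗[ℂ] A),
    T1 (a ⊗ₜ b) * z = ΔL a (TensorProduct.map (LinearMap.mulLeft ℂ b) LinearMap.id z)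
  ΔL_T2 : ∀ (a b : A) (z : A ⊗[ℂ] A),
    T2 (a ⊗ₜ b) * z = ΔL a (TensorProduct.map LinearMap.id (LinearMap.mulLeft ℂ b) z)
  ΔR_T3 : ∀ (a b : A) (z : A ⊗[ℂ] A),
    z * T3 (a ⊗ₜ b) = ΔR a (TensorProduct.map (LinearMap.mulRight ℂ b) LinearMap.id z)
  ΔR_T4 : ∀ (a b : A) (z : A ⊗[ℂ] A),
    z * T4 (a ⊗ₜ b) = ΔR a (TensorProduct.map LinearMap.id (LinearMap.mulRight ℂ b) z)
  /- coassociativity of `Δ` -/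
  coassoc : ∀ a b c : A,
    (TensorProduct.assoc ℂ A A A)
        (LinearMap.rTensor A (T3.toLinearMap ∘ₗ (TensorProduct.mk ℂ A A).flip a)
          (T2 (c ⊗ₜ b)))
      = LinearMap.lTensor A (T2.toLinearMap ∘ₗ (TensorProduct.mk ℂ A A).flip b)
          (T3 (c ⊗ₜ a))

namespace AQG

variable {A : Type*} [NonUnitalRing A] [Module ℂ A]
  [SMulCommClass ℂ A A] [IsScalarTower ℂ A A] (H : AQG A)

/-- The functional `φa : x ↦ φ(x a)`; the dual algebra is `Â = {φa : a ∈ A}`. -/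
def lFun (a : A) : A →ₗ[ℂ] ℂ := H.phi ∘ₗ LinearMap.mulRight ℂ a

/-- The functional `aφ : x ↦ φ(a x)`; also `Â = {aφ : a ∈ A}`. -/
def rFun (a : A) : A →ₗ[ℂ] ℂ := H.phi ∘ₗ LinearMap.mulLeft ℂ a

/-- The right invariant functional `ψ = φ ∘ S`. -/
def psi : A →ₗ[ℂ] ℂ := H.phi ∘ₗ H.S.toLinearMap

/-- The functional `ψa : x ↦ ψ(x a)`. -/
def lFunPsi (a : A) : A →ₗ[ℂ] ℂ := H.psi ∘ₗ LinearMap.mulRight ℂ a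

/-- The right action of `Â` on `A'`: `Ract θ a = θ · (φa)`,
`(θ (φa))(x) = θ((ι ⊙ φa)Δ(x)) = θ((ι ⊙ φ)(Δ(x)(1 ⊗ a)))`. -/
def Ract (θ : A →ₗ[ℂ] ℂ) (a : A) : A →ₗ[ℂ] ℂ :=
  θ ∘ₗ sliceR H.phi ∘ₗ H.T2.toLinearMap ∘ₗ (TensorProduct.mk ℂ A A).flip a

/-- The left action of `Â` on `A'`: `Lact θ a = (φa) · θ`,
`((φa) θ)(x) = θ((φa ⊙ ι)Δ(x)) = θ((φ ⊙ ι)(Δ(x)(a ⊗ 1)))`. -/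
def Lact (θ : A →ₗ[ℂ] ℂ) (a : A) : A →ₗ[ℂ] ℂ :=
  θ ∘ₗ sliceL H.phi ∘ₗ H.T1.toLinearMap ∘ₗ (TensorProduct.mk ℂ A A).flip a

/-- `c = (ι ⊙ θ)Δ(x)` as an element of `A` (a priori it is only a multiplier). -/
def IsRSlice (θ : A →ₗ[ℂ] ℂ) (x c : A) : Prop :=
  (∀ b : A, c * b = sliceR θ (H.T1 (x ⊗ₜ b))) ∧
  (∀ b : A, b * c = sliceR θ (H.T3 (x ⊗ₜ b)))

/-- `c = (θ ⊙ ι)Δ(x)` as an element of `A`. -/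
def IsLSlice (θ : A →ₗ[ℂ] ℂ) (x c : A) : Prop :=
  (∀ b : A, c * b = sliceL θ (H.T2 (x ⊗ₜ b))) ∧
  (∀ b : A, b * c = sliceL θ (H.T4 (x ⊗ₜ b)))

/-- `θ ∈ M(Â)`: all slices `(θ ⊙ ι)Δ(x)` and `(ι ⊙ θ)Δ(x)` belong to `A`. -/
def HasSlices (θ : A →ₗ[ℂ] ℂ) : Prop :=
  ∀ x : A, (∃ c, H.IsRSlice θ x c) ∧ (∃ c, H.IsLSlice θ x c)

end AQG

end


noncomputable section LocalUnitHelpers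

set_option linter.unusedSectionVars false

open TensorProduct LinearMap

variable {A : Type*} [NonUnitalRing A] [Module ℂ A]
  [SMulCommClass ℂ A A] [IsScalarTower ℂ A A]

@[simp] lemma sliceL_tmul' (θ : A →ₗ[ℂ] ℂ) (x y : A) :
    sliceL θ (x ⊗ₜ[ℂ] y) = θ x • y := by simp [sliceL]

@[simp] lemma sliceR_tmul' (θ : A →ₗ[ℂ] ℂ) (x y : A) :
    sliceR θ (x ⊗ₜ[ℂ] y) = θ y • x := by simp [sliceR]

/-- right slices separate points of `A ⊗ A` -/
lemma sliceR_sep (z : A ⊗[ℂ] A) (h : ∀ θ : Module.Dual ℂ A, sliceR θ z = 0) : z = 0 := by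
  classical
  set B := Module.Basis.ofVectorSpace ℂ A
  have key : ∀ (i j : Module.Basis.ofVectorSpaceIndex ℂ A) (w : A ⊗[ℂ] A),
      (B.tensorProduct B).repr w (i, j) = B.coord i (sliceR (B.coord j) w) := by
    intro i j w
    induction w using TensorProduct.induction_on with
    | zero => simp
    | tmul u v => simp [Module.Basis.tensorProduct_repr_tmul_apply, Module.Basis.coord_apply, mul_comm]
    | add x y hx hy => simp [map_add, hx, hy]
  apply (B.tensorProduct B).repr.injective
  ext ⟨i, j⟩
  simp only [map_zero, Finsupp.coe_zero, Pi.zero_apply]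
  rw [key i j z, h (B.coord j)]
  simp

/-- left slices separate points of `A ⊗ A` -/
lemma sliceL_sep (z : A ⊗[ℂ] A) (h : ∀ θ : Module.Dual ℂ A, sliceL θ z = 0) : z = 0 := by
  classical
  set B := Module.Basis.ofVectorSpace ℂ A
  have key : ∀ (i j : Module.Basis.ofVectorSpaceIndex ℂ A) (w : A ⊗[ℂ] A),
      (B.tensorProduct B).repr w (i, j) = B.coord j (sliceL (B.coord i) w) := by
    intro i j w
    induction w using TensorProduct.induction_on with
    | zero => simp
    | tmul u v => simp [Module.Basis.tensorProduct_repr_tmul_apply, Module.Basis.coord_apply, mul_comm]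
    | add x y hx hy => simp [map_add, hx, hy]
  apply (B.tensorProduct B).repr.injective
  ext ⟨i, j⟩
  simp only [map_zero, Finsupp.coe_zero, Pi.zero_apply]
  rw [key i j z, h (B.coord i)]
  simp

lemma tmm (a b c d : A) : (a ⊗ₜ[ℂ] b) * (c ⊗ₜ d) = (a*c) ⊗ₜ (b*d) :=
  Algebra.TensorProduct.tmul_mul_tmul a c b d

lemma mul_sliceL (ω : A →ₗ[ℂ] ℂ) (s : A) (z : A ⊗[ℂ] A) :
    s * sliceL ω z = sliceL ω (map id (mulLeft ℂ s) z) := by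
  induction z using TensorProduct.induction_on with
  | zero => simp
  | tmul u v => simp [mul_smul_comm]
  | add x y hx hy => simp [map_add, mul_add, hx, hy]

lemma sliceL_mul (ω : A →ₗ[ℂ] ℂ) (s : A) (z : A ⊗[ℂ] A) :
    sliceL ω z * s = sliceL ω (map id (mulRight ℂ s) z) := by
  induction z using TensorProduct.induction_on with
  | zero => simp
  | tmul u v => simp [smul_mul_assoc]
  | add x y hx hy => simp [map_add, add_mul, hx, hy]

lemma sliceR_comp_mulRight (θ : A →ₗ[ℂ] ℂ) (s : A) (z : A ⊗[ℂ] A) :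
    sliceR (θ ∘ₗ mulRight ℂ s) z = sliceR θ (map id (mulRight ℂ s) z) := by
  induction z using TensorProduct.induction_on with
  | zero => simp
  | tmul u v => simp
  | add x y hx hy => simp [map_add, hx, hy]

lemma sliceR_comp_mulLeft (θ : A →ₗ[ℂ] ℂ) (s : A) (z : A ⊗[ℂ] A) :
    sliceR (θ ∘ₗ mulLeft ℂ s) z = sliceR θ (map id (mulLeft ℂ s) z) := by
  induction z using TensorProduct.induction_on with
  | zero => simp
  | tmul u v => simp
  | add x y hx hy => simp [map_add, hx, hy]

lemma sliceR_mul_tmul (θ : A →ₗ[ℂ] ℂ) (z : A ⊗[ℂ] A) (r s : A) :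
    sliceR θ (z * (r ⊗ₜ[ℂ] s)) = sliceR (θ ∘ₗ mulRight ℂ s) z * r := by
  induction z using TensorProduct.induction_on with
  | zero => simp
  | tmul u v => simp [tmm, smul_mul_assoc]
  | add x y hx hy => simp [add_mul, map_add, hx, hy]

lemma sliceR_tmul_mul (θ : A →ₗ[ℂ] ℂ) (z : A ⊗[ℂ] A) (r s : A) :
    sliceR θ ((r ⊗ₜ[ℂ] s) * z) = r * sliceR (θ ∘ₗ mulLeft ℂ s) z := by
  induction z using TensorProduct.induction_on with
  | zero => simp
  | tmul u v => simp [tmm, mul_smul_comm]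
  | add x y hx hy => simp [mul_add, map_add, hx, hy]

/-- the algebra `A ⊗ A` is non-degenerate (right-multiplication version) -/
lemma tensor_nondeg_l (hA : ∀ a : A, (∀ b : A, a * b = 0) → a = 0)
    (z : A ⊗[ℂ] A) (h : ∀ w, z * w = 0) : z = 0 := by
  have h1 : ∀ (θ : Module.Dual ℂ A) (s : A), sliceR (θ ∘ₗ mulRight ℂ s) z = 0 := by
    intro θ s
    apply hA
    intro r
    rw [← sliceR_mul_tmul, h (r ⊗ₜ s), map_zero]
  have h2 : ∀ s : A, map (id : A →ₗ[ℂ] A) (mulRight ℂ s) z = 0 := by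
    intro s
    apply sliceR_sep
    intro θ
    rw [← sliceR_comp_mulRight]
    exact h1 θ s
  apply sliceL_sep
  intro θ
  apply hA
  intro s
  rw [sliceL_mul, h2 s, map_zero]

/-- the algebra `A ⊗ A` is non-degenerate (left-multiplication version) -/
lemma tensor_nondeg_r (hA : ∀ a : A, (∀ b : A, b * a = 0) → a = 0)
    (z : A ⊗[ℂ] A) (h : ∀ w, w * z = 0) : z = 0 := by
  have h1 : ∀ (θ : Module.Dual ℂ A) (s : A), sliceR (θ ∘ₗ mulLeft ℂ s) z = 0 := by
    intro θ s
    apply hA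
    intro r
    rw [← sliceR_tmul_mul, h (r ⊗ₜ s), map_zero]
  have h2 : ∀ s : A, map (id : A →ₗ[ℂ] A) (mulLeft ℂ s) z = 0 := by
    intro s
    apply sliceR_sep
    intro θ
    rw [← sliceR_comp_mulLeft]
    exact h1 θ s
  apply sliceL_sep
  intro θ
  apply hA
  intro s
  rw [mul_sliceL, h2 s, map_zero]

lemma E1 (s : A) (y z : A ⊗[ℂ] A) :
    (map id (mulRight ℂ s) y) * z = y * (map id (mulLeft ℂ s) z) := by
  induction y using TensorProduct.induction_on with
  | zero => simp
  | add p q hp hq => simp [map_add, add_mul, hp, hq]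
  | tmul u v =>
    induction z using TensorProduct.induction_on with
    | zero => simp
    | add p q hp hq => simp only [map_add, mul_add, hp, hq]
    | tmul r t => simp [tmm, mul_assoc]

lemma E2 (s : A) (w Z : A ⊗[ℂ] A) :
    w * (map id (mulRight ℂ s) Z) = map id (mulRight ℂ s) (w * Z) := by
  induction w using TensorProduct.induction_on with
  | zero => simp
  | add p q hp hq => simp [map_add, add_mul, hp, hq]
  | tmul u v =>
    induction Z using TensorProduct.induction_on with
    | zero => simp
    | add p q hp hq => simp only [map_add, mul_add, hp, hq]
    | tmul r t => simp [tmm, mul_assoc]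

lemma E4 (s : A) (Y z : A ⊗[ℂ] A) :
    (map id (mulLeft ℂ s) Y) * z = map id (mulLeft ℂ s) (Y * z) := by
  induction Y using TensorProduct.induction_on with
  | zero => simp
  | add p q hp hq => simp [map_add, add_mul, hp, hq]
  | tmul u v =>
    induction z using TensorProduct.induction_on with
    | zero => simp
    | add p q hp hq => simp only [map_add, mul_add, hp, hq]
    | tmul r t => simp [tmm, mul_assoc]

lemma E5 (a : A) (y z : A ⊗[ℂ] A) :
    (map (mulRight ℂ a) id y) * z = y * (map (mulLeft ℂ a) id z) := by
  induction y using TensorProduct.induction_on with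
  | zero => simp
  | add p q hp hq => simp [map_add, add_mul, hp, hq]
  | tmul u v =>
    induction z using TensorProduct.induction_on with
    | zero => simp
    | add p q hp hq => simp only [map_add, mul_add, hp, hq]
    | tmul r t => simp [tmm, mul_assoc]

lemma swap_slices (ω θ : A →ₗ[ℂ] ℂ) (z : A ⊗[ℂ] A) :
    ω (sliceR θ z) = θ (sliceL ω z) := by
  induction z using TensorProduct.induction_on with
  | zero => simp
  | tmul u v => simp [smul_eq_mul, mul_comm]
  | add x y hx hy => simp [map_add, hx, hy]

lemma sliceL_map_mulLeft_vanish (ω : A →ₗ[ℂ] ℂ) (a : A) (h : ∀ x, ω (a * x) = 0)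
    (Z : A ⊗[ℂ] A) : sliceL ω (map (mulLeft ℂ a) id Z) = 0 := by
  induction Z using TensorProduct.induction_on with
  | zero => simp
  | tmul u v => simp [h u]
  | add x y hx hy => simp [map_add, hx, hy]

lemma sliceL_map_mulRight_vanish (ω : A →ₗ[ℂ] ℂ) (a : A) (h : ∀ x, ω (x * a) = 0)
    (Z : A ⊗[ℂ] A) : sliceL ω (map (mulRight ℂ a) id Z) = 0 := by
  induction Z using TensorProduct.induction_on with
  | zero => simp
  | tmul u v => simp [h u]
  | add x y hx hy => simp [map_add, hx, hy]

namespace AQG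

variable (H : AQG A)

lemma key_II (b s : A) (w : A ⊗[ℂ] A) :
    map id (mulRight ℂ s) (H.ΔR b w) = w * H.T2 (b ⊗ₜ s) := by
  rw [← sub_eq_zero]
  apply tensor_nondeg_l H.nondeg_l
  intro z
  rw [sub_mul, sub_eq_zero, E1, H.ΔLR, ← H.ΔL_T2, mul_assoc]

lemma key_II'' (b s : A) (z' : A ⊗[ℂ] A) :
    map id (mulLeft ℂ s) (H.ΔL b z') = H.T4 (b ⊗ₜ s) * z' := by
  rw [← sub_eq_zero]
  apply tensor_nondeg_r H.nondeg_r
  intro w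
  rw [mul_sub, sub_eq_zero, ← E1, ← H.ΔLR, ← mul_assoc, H.ΔR_T4]

lemma key_I (a b s : A) :
    map id (mulRight ℂ s) (H.T3 (b ⊗ₜ a)) = map (mulLeft ℂ a) id (H.T2 (b ⊗ₜ s)) := by
  rw [← sub_eq_zero]
  apply tensor_nondeg_r H.nondeg_r
  intro w
  rw [mul_sub, sub_eq_zero, E2, H.ΔR_T3, key_II, ← E5]

lemma key_I' (a b s : A) :
    map id (mulLeft ℂ s) (H.T1 (b ⊗ₜ a)) = map (mulRight ℂ a) id (H.T4 (b ⊗ₜ s)) := by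
  rw [← sub_eq_zero]
  apply tensor_nondeg_l H.nondeg_l
  intro z
  rw [sub_mul, sub_eq_zero, E4, H.ΔL_T1, key_II'', ← E5]

lemma exists_phi_ne : ∃ b : A, H.phi b ≠ 0 := by
  by_contra hc
  push_neg at hc
  exact H.phi_ne (LinearMap.ext fun b => hc b)

lemma vanish_r (H : AQG A) (ω : A →ₗ[ℂ] ℂ) (a : A) (h : ∀ x, ω (a * x) = 0) : ω a = 0 := by
  obtain ⟨b, hb⟩ := H.exists_phi_ne
  have hz : sliceL ω (H.T3 (b ⊗ₜ a)) = 0 := by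
    apply H.nondeg_l
    intro s
    rw [sliceL_mul, H.key_I a b s, sliceL_map_mulLeft_vanish ω a h]
  have hswap := swap_slices ω H.phi (H.T3 (b ⊗ₜ a))
  rw [hz, map_zero, H.left_inv_T3, map_smul, smul_eq_mul] at hswap
  exact (mul_eq_zero.mp hswap).resolve_left hb

lemma vanish_l (H : AQG A) (ω : A →ₗ[ℂ] ℂ) (a : A) (h : ∀ x, ω (x * a) = 0) : ω a = 0 := by
  obtain ⟨b, hb⟩ := H.exists_phi_ne
  have hz : sliceL ω (H.T1 (b ⊗ₜ a)) = 0 := by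
    apply H.nondeg_r
    intro s
    rw [mul_sliceL, H.key_I' a b s, sliceL_map_mulRight_vanish ω a h]
  have hswap := swap_slices ω H.phi (H.T1 (b ⊗ₜ a))
  rw [hz, map_zero, H.left_inv_T1, map_smul, smul_eq_mul] at hswap
  exact (mul_eq_zero.mp hswap).resolve_left hb

lemma exists_left_unit (H : AQG A) (a : A) : ∃ e : A, e * a = a := by
  have : a ∈ LinearMap.range (mulRight ℂ a) := by
    rw [← Subspace.forall_mem_dualAnnihilator_apply_eq_zero_iff]
    intro ω hω
    apply H.vanish_l ω a
    intro x
    exact (Submodule.mem_dualAnnihilator ω).mp hω (x * a) ⟨x, rfl⟩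
  obtain ⟨e, he⟩ := this
  exact ⟨e, he⟩

lemma exists_right_unit (H : AQG A) (a : A) : ∃ f : A, a * f = a := by
  have : a ∈ LinearMap.range (mulLeft ℂ a) := by
    rw [← Subspace.forall_mem_dualAnnihilator_apply_eq_zero_iff]
    intro ω hω
    apply H.vanish_r ω a
    intro x
    exact (Submodule.mem_dualAnnihilator ω).mp hω (a * x) ⟨x, rfl⟩
  obtain ⟨f, hf⟩ := this
  exact ⟨f, hf⟩

lemma left_units (H : AQG A) : ∀ (n : ℕ) (a : Fin n → A), ∃ e : A, ∀ i, e * a i = a i := by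
  intro n
  induction n with
  | zero => exact fun a => ⟨0, fun i => i.elim0⟩
  | succ n ih =>
    intro a
    obtain ⟨e1, he1⟩ := ih (fun i => a i.castSucc)
    obtain ⟨e2, he2⟩ := H.exists_left_unit (a (Fin.last n) - e1 * a (Fin.last n))
    refine ⟨e1 + e2 - e2 * e1, ?_⟩
    intro i
    refine Fin.lastCases ?_ ?_ i
    · have h2 : e2 * a (Fin.last n) - e2 * (e1 * a (Fin.last n))
          = a (Fin.last n) - e1 * a (Fin.last n) := by
        rw [← mul_sub]; exact he2
      calc (e1 + e2 - e2 * e1) * a (Fin.last n)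
          = e1 * a (Fin.last n) + e2 * a (Fin.last n) - e2 * (e1 * a (Fin.last n)) := by
            rw [sub_mul, add_mul, mul_assoc]
        _ = e1 * a (Fin.last n) + (e2 * a (Fin.last n) - e2 * (e1 * a (Fin.last n))) := by
            rw [add_sub_assoc]
        _ = a (Fin.last n) := by rw [h2]; abel
    · intro j
      have h1 := he1 j
      calc (e1 + e2 - e2 * e1) * a j.castSucc
          = e1 * a j.castSucc + e2 * a j.castSucc - e2 * (e1 * a j.castSucc) := by
            rw [sub_mul, add_mul, mul_assoc]
        _ = a j.castSucc := by rw [h1]; abel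
 
lemma right_units (H : AQG A) : ∀ (n : ℕ) (a : Fin n → A), ∃ f : A, ∀ i, a i * f = a i := by
  intro n
  induction n with
  | zero => exact fun a => ⟨0, fun i => i.elim0⟩
  | succ n ih =>
    intro a
    obtain ⟨f1, hf1⟩ := ih (fun i => a i.castSucc)
    obtain ⟨f2, hf2⟩ := H.exists_right_unit (a (Fin.last n) - a (Fin.last n) * f1)
    refine ⟨f1 + f2 - f1 * f2, ?_⟩
    intro i
    refine Fin.lastCases ?_ ?_ i
    · have h2 : a (Fin.last n) * f2 - a (Fin.last n) * f1 * f2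
          = a (Fin.last n) - a (Fin.last n) * f1 := by
        rw [← sub_mul]; exact hf2
      calc a (Fin.last n) * (f1 + f2 - f1 * f2)
          = a (Fin.last n) * f1 + a (Fin.last n) * f2 - a (Fin.last n) * f1 * f2 := by
            rw [mul_sub, mul_add, ← mul_assoc]
        _ = a (Fin.last n) * f1 + (a (Fin.last n) * f2 - a (Fin.last n) * f1 * f2) := by
            rw [add_sub_assoc]
        _ = a (Fin.last n) := by rw [h2]; abel
    · intro j
      have h1 := hf1 j
      calc a j.castSucc * (f1 + f2 - f1 * f2)
          = a j.castSucc * f1 + a j.castSucc * f2 - (a j.castSucc * f1) * f2 := by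
            rw [mul_sub, mul_add, ← mul_assoc]
        _ = a j.castSucc := by rw [h1]; abel

end AQG

end LocalUnitHelpers

/-- In an algebraic quantum group, every finite collection of elements
admits a local unit. -/
theorem AQG.local_units {A : Type*} [NonUnitalRing A] [Module ℂ A]
    [SMulCommClass ℂ A A] [IsScalarTower ℂ A A] (H : AQG A)
    (n : ℕ) (a : Fin n → A) :
    ∃ c : A, ∀ i : Fin n, c * a i = a i ∧ a i * c = a i := by
  obtain ⟨e, he⟩ := H.left_units n a
  obtain ⟨f, hf⟩ := H.right_units n a
  refine ⟨e + f - f * e, fun i => ⟨?_, ?_⟩⟩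
  · calc (e + f - f * e) * a i = e * a i + f * a i - f * (e * a i) := by
          rw [sub_mul, add_mul, mul_assoc]
      _ = a i := by rw [he i]; abel
  · calc a i * (e + f - f * e) = a i * e + a i * f - (a i * f) * e := by
          rw [mul_sub, mul_add, ← mul_assoc]
      _ = a i := by rw [hf i]; abel
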